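/- W_{L,s}(1) = p^n(d_1 + d_2 - 2), where d_1 = gcd(k, p^n+1) and d_2 = gcd(k-1, p^n+1). -/

import Mathlib

open scoped BigOperators

open Finset Polynomial

section aux
variable {E : Type} [Field E] [Fintype E]


lemma aux_card_pow_eq_le {m : ℕ} (hm : m ≠ 0) (c : E)
    [DecidablePred fun y : E => y ^ m = c] :
    (univ.filter (fun y : E => y ^ m = c)).card ≤ m := by
  classical
  have hsub : (univ.filter (fun y : E => y ^ m = c)) ⊆ (nthRoots m c).toFinset := by
    intro y hy
    rw [Multiset.mem_toFinset, mem_nthRoots (Nat.pos_of_ne_zero hm)]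
    exact (mem_filter.mp hy).2
  calc (univ.filter (fun y : E => y ^ m = c)).card
      ≤ (nthRoots m c).toFinset.card := Finset.card_le_card hsub
    _ ≤ Multiset.card (nthRoots m c) := Multiset.toFinset_card_le _
    _ ≤ m := card_nthRoots m c

lemma aux_card_rootsOfUnity {d : ℕ} (hd : d ≠ 0) (hdvd : d ∣ Fintype.card E - 1)
    [DecidablePred fun y : E => y ^ d = 1] :
    (univ.filter (fun y : E => y ^ d = 1)).card = d := by
  classical
  obtain ⟨g, hg⟩ := IsCyclic.exists_monoid_generator (α := Eˣ)
  have hog : orderOf g = Fintype.card E - 1 := by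
    rw [orderOf_eq_card_of_forall_mem_zpowers (fun y => Subgroup.mem_zpowers_iff.mpr
      (by obtain ⟨j, hj⟩ := hg y; exact ⟨(j : ℤ), by simpa using hj⟩)),
      Nat.card_eq_fintype_card, Fintype.card_units]
  have hN0 : Fintype.card E - 1 ≠ 0 := by
    have : 1 < Fintype.card E := Fintype.one_lt_card
    omega
  obtain ⟨m, hm⟩ := hdvd
  have hm0 : m ≠ 0 := by rintro rfl; simp [hm] at hN0
  have hgcd : (Fintype.card E - 1).gcd m = m := Nat.gcd_eq_right ⟨d, by rw [hm]; ring⟩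
  have hζord : orderOf (g ^ m) = d := by
    rw [orderOf_pow, hog, hgcd, hm, Nat.mul_div_cancel _ (Nat.pos_of_ne_zero hm0)]
  have hζ : IsPrimitiveRoot ((g ^ m : Eˣ) : E) d := by
    refine IsPrimitiveRoot.coe_units_iff.mpr ?_
    have := IsPrimitiveRoot.orderOf (g ^ m)
    rwa [hζord] at this
  refine Eq.trans ?_ hζ.card_nthRootsFinset
  congr 1
  ext y
  simp [Polynomial.mem_nthRootsFinset (Nat.pos_of_ne_zero hd)]

lemma aux_trace_pow_char (p : ℕ) [Fact p.Prime] (L : Type) [Field L] [Fintype L]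
    [Algebra (ZMod p) L] [CharP L p] (x : L) :
    Algebra.trace (ZMod p) L (x ^ p) = Algebra.trace (ZMod p) L x := by
  let f : L →ₐ[ZMod p] L :=
    { toRingHom := frobenius L p
      commutes' := fun r => by
        show frobenius L p (algebraMap (ZMod p) L r) = algebraMap (ZMod p) L r
        rw [frobenius_def, ← map_pow, ZMod.pow_card] }
  have hbij : Function.Bijective f :=
    (Finite.injective_iff_bijective).mp (RingHom.injective (f : L →+* L))
  have := Algebra.trace_eq_of_algEquiv (AlgEquiv.ofBijective f hbij) x
  simpa [AlgEquiv.ofBijective, f, frobenius_def] using this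

lemma aux_trace_pow_char_pow (p : ℕ) [Fact p.Prime] (L : Type) [Field L] [Fintype L]
    [Algebra (ZMod p) L] [CharP L p] (m : ℕ) (x : L) :
    Algebra.trace (ZMod p) L (x ^ p ^ m) = Algebra.trace (ZMod p) L x := by
  induction m with
  | zero => simp
  | succ m ih => rw [pow_succ, pow_mul, aux_trace_pow_char, ih]

lemma aux_trace_eq_zero (p : ℕ) [Fact p.Prime] (hp : Odd p) (L : Type) [Field L] [Fintype L]
    [Algebra (ZMod p) L] [CharP L p] {m : ℕ} {z : L} (hz : z ^ p ^ m = -z) :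
    Algebra.trace (ZMod p) L z = 0 := by
  have h := aux_trace_pow_char_pow p L m z
  rw [hz, map_neg] at h
  have h2 : (2 : ZMod p) * Algebra.trace (ZMod p) L z = 0 := by linear_combination -h
  have h2' : (2 : ZMod p) ≠ 0 := by
    intro hc
    have h2n : ((2 : ℕ) : ZMod p) = 0 := by exact_mod_cast hc
    rw [ZMod.natCast_eq_zero_iff] at h2n
    have hle := Nat.le_of_dvd (by norm_num) h2n
    have hp2 := (Fact.out : p.Prime).two_le
    have : p = 2 := by omega
    subst this
    exact (Nat.not_odd_iff_even.mpr (by norm_num)) hp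
  exact (mul_eq_zero.mp h2).elim (fun h => absurd h h2') id

end aux

/-- The Weil sum `W_{F,s}(a) = ∑_{x ∈ F} μ(x^s - a x)`, where `μ` is the canonical
additive character `μ(x) = ζ_p^{Tr_{F/𝔽_p}(x)}` of the finite field `F`. -/
noncomputable def weilSum (p : ℕ) (F : Type) [Field F] [Fintype F]
    [Algebra (ZMod p) F] (s : ℕ) (a : F) : ℂ :=
  ∑ x : F, Complex.exp (2 * Real.pi * Complex.I *
    ((Algebra.trace (ZMod p) F (x ^ s - a * x)).val : ℂ) / (p : ℂ))

/-- `W_{L,s}(1) = p^n(d₁ + d₂ - 2)`, where `d₁ = gcd(k, p^n+1)` and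
`d₂ = gcd(k-1, p^n+1)`. -/
theorem weil_sum_at_one (p n : ℕ) [Fact p.Prime] (hn : 0 < n)
    (F L : Type) [Field F] [Fintype F] [Field L] [Fintype L]
    [Algebra (ZMod p) L] [Algebra F L]
    (hF : Fintype.card F = p ^ n) (hL : Fintype.card L = p ^ (2 * n))
    (k s : ℕ) (hsk : s = 1 + k * (p ^ n - 1)) (hs : Nat.Coprime s (p ^ (2 * n) - 1))
    (hp : Odd p) (hk2 : 2 ≤ k) (hkp : k ≤ p ^ n) :
    weilSum p L s 1 =
      (p : ℂ) ^ n * ((Nat.gcd k (p ^ n + 1) : ℂ) + (Nat.gcd (k - 1) (p ^ n + 1) : ℂ) - 2) := by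
  classical
  have hp2 : 2 < p := by
    have h2 := (Fact.out : p.Prime).two_le
    have : p ≠ 2 := by rintro rfl; exact (by norm_num : ¬ Odd 2) hp
    omega
  set q : ℕ := p ^ n with hq
  have hpq : p ≤ q := Nat.le_self_pow (by omega) p
  have hq3 : 3 ≤ q := le_trans (by omega) hpq
  have hqodd : q % 2 = 1 := Nat.odd_iff.mp (hp.pow)
  have hqL : Fintype.card L = q ^ 2 := by rw [hL, hq, ← pow_mul, mul_comm n 2]
  have hq2m1 : q ^ 2 - 1 = (q - 1) * (q + 1) := by
    have h1 : 1 ≤ q := by omega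
    have h2 : 1 ≤ q ^ 2 := Nat.one_le_pow _ _ (by omega)
    zify [h1, h2]
    ring
  clear_value q
  haveI : CharP L p := charP_of_injective_ringHom (algebraMap (ZMod p) L).injective p
  haveI : Algebra.IsSeparable (ZMod p) L := inferInstance
  set tr : L → ZMod p := fun y => Algebra.trace (ZMod p) L y with htr
  set ψ : AddChar L ℂ :=
    (ZMod.stdAddChar (N := p)).compAddMonoidHom (Algebra.trace (ZMod p) L).toAddMonoidHom
    with hψdef
  have hψ_apply : ∀ y : L, ψ y = ZMod.stdAddChar (tr y) := fun y => rfl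
  have hψ_one : ∀ y : L, ψ y = 1 ↔ tr y = 0 := by
    intro y
    constructor
    · intro h
      apply ZMod.injective_stdAddChar (N := p)
      rw [← hψ_apply, h, ← AddChar.map_zero_eq_one (ZMod.stdAddChar (N := p))]
    · intro h
      rw [hψ_apply, h, AddChar.map_zero_eq_one]
  have hW : weilSum p L s 1 = ∑ x : L, ψ (x ^ s - x) := by
    unfold weilSum
    refine Finset.sum_congr rfl fun x _ => ?_
    rw [one_mul, hψ_apply, ZMod.stdAddChar_apply, ZMod.toCircle_apply]
  have hψ_ne : ψ ≠ 1 := by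
    obtain ⟨y, hy⟩ := Algebra.trace_surjective (ZMod p) L 1
    refine AddChar.ne_one_iff.mpr ⟨y, ?_⟩
    intro h
    have := (hψ_one y).mp h
    rw [htr] at this
    simp only at this
    rw [hy] at this
    exact one_ne_zero this
  have hψsum : ∑ y : L, ψ y = 0 := AddChar.sum_eq_zero_of_ne_one hψ_ne
  set ι : F →+* L := (algebraMap F L : F →+* L) with hι
  have hι_inj : Function.Injective ι := RingHom.injective ι
  -- the inner sums
  have hT : ∀ b : L, ∑ t : F, ψ (b * ι t) =
      if (∀ t : F, tr (b * ι t) = 0) then (q : ℂ) else 0 := by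
    intro b
    by_cases hb : ∀ t : F, tr (b * ι t) = 0
    · rw [if_pos hb]
      have : ∀ t : F, ψ (b * ι t) = 1 := fun t => (hψ_one _).mpr (hb t)
      rw [Finset.sum_congr rfl (fun t _ => this t), Finset.sum_const, Finset.card_univ, hF,
        nsmul_eq_mul, mul_one]
    · rw [if_neg hb]
      set χ : AddChar F ℂ :=
        ψ.compAddMonoidHom ((AddMonoidHom.mulLeft b).comp ι.toAddMonoidHom) with hχ
      have hχ_apply : ∀ t : F, χ t = ψ (b * ι t) := fun t => rfl
      push_neg at hb
      obtain ⟨t₀, ht₀⟩ := hb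
      have hχne : χ ≠ 1 := by
        refine AddChar.ne_one_iff.mpr ⟨t₀, ?_⟩
        rw [hχ_apply]
        intro h
        exact ht₀ ((hψ_one _).mp h)
      rw [show ∑ t : F, ψ (b * ι t) = ∑ t : F, χ t from
        Finset.sum_congr rfl (fun t _ => (hχ_apply t).symm)]
      exact AddChar.sum_eq_zero_of_ne_one hχne
  -- the set S of b with trivial restricted character has cardinality q
  set S : Finset L := univ.filter (fun b : L => ∀ t : F, tr (b * ι t) = 0) with hS
  have hq0C : (q : ℂ) ≠ 0 := by
    exact_mod_cast (by omega : q ≠ 0)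
  have hScard : S.card = q := by
    have h1 : ∑ b : L, ∑ t : F, ψ (b * ι t) = (S.card : ℂ) * q := by
      rw [Finset.sum_congr rfl (fun b _ => hT b), Finset.sum_ite, Finset.sum_const,
        Finset.sum_const_zero, add_zero, nsmul_eq_mul]
    have h2 : ∑ b : L, ∑ t : F, ψ (b * ι t) = (q : ℂ) ^ 2 := by
      rw [Finset.sum_comm]
      have inner : ∀ t : F, ∑ b : L, ψ (b * ι t) = if t = 0 then ((q : ℂ) ^ 2) else 0 := by
        intro t
        by_cases ht : t = 0
        · subst ht
          rw [if_pos rfl]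
          have h1' : ∀ b : L, ψ (b * ι 0) = 1 := by
            intro b; rw [map_zero, mul_zero, AddChar.map_zero_eq_one]
          rw [Finset.sum_congr rfl (fun b _ => h1' b), Finset.sum_const, Finset.card_univ, hqL,
            nsmul_eq_mul, mul_one]
          push_cast
          ring
        · rw [if_neg ht]
          have hιt : ι t ≠ 0 := fun h => ht (hι_inj (by rw [h, map_zero]))
          rw [← hψsum]
          exact Fintype.sum_bijective (fun b : L => b * ι t)
            (mulRight_bijective₀ _ hιt) _ _ (fun b => rfl)
      rw [Finset.sum_congr rfl (fun t _ => inner t), Finset.sum_ite_eq' univ (0 : F)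
        (fun _ => ((q : ℂ) ^ 2)), if_pos (mem_univ _)]
    have : (S.card : ℂ) * q = (q : ℂ) ^ 2 := by rw [← h1, h2]
    have hcard : (S.card : ℂ) = q := by
      have h3 : (S.card : ℂ) * q = (q : ℂ) * q := by rw [this]; ring
      exact mul_right_cancel₀ hq0C h3
    exact_mod_cast hcard
  -- an element ω with ω^(q-1) = -1
  have hcardL1 : Fintype.card L - 1 = q ^ 2 - 1 := by rw [hqL]
  obtain ⟨ω, hω0, hωq⟩ : ∃ ω : L, ω ≠ 0 ∧ ω ^ (q - 1) = -1 := by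
    obtain ⟨g, hg⟩ := IsCyclic.exists_monoid_generator (α := Lˣ)
    have hog : orderOf g = q ^ 2 - 1 := by
      rw [orderOf_eq_card_of_forall_mem_zpowers (fun y => Subgroup.mem_zpowers_iff.mpr
        (by obtain ⟨j, hj⟩ := hg y; exact ⟨(j : ℤ), by simpa using hj⟩)),
        Nat.card_eq_fintype_card, Fintype.card_units, hcardL1]
    set m : ℕ := (q + 1) / 2 with hm
    have h2m : 2 * m = q + 1 := by clear hq; omega
    have hmq : m * (q - 1) * 2 = q ^ 2 - 1 := by
      rw [hq2m1]
      calc m * (q - 1) * 2 = (2 * m) * (q - 1) := by ring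
        _ = (q + 1) * (q - 1) := by rw [h2m]
        _ = (q - 1) * (q + 1) := by ring
    set x : L := (g : L) ^ (m * (q - 1)) with hx
    have hx2 : x ^ 2 = 1 := by
      rw [hx, ← pow_mul, hmq, ← hcardL1]
      exact FiniteField.pow_card_sub_one_eq_one _ (Units.ne_zero g)
    have hxne : x ≠ 1 := by
      intro hx1
      have hgu : g ^ (m * (q - 1)) = 1 := Units.ext (by rw [Units.val_pow_eq_pow_val, ← hx, hx1]; rfl)
      have hdvd := orderOf_dvd_of_pow_eq_one hgu
      rw [hog] at hdvd
      have hq2pos : 9 ≤ q ^ 2 := by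
        calc 9 = 3 ^ 2 := by norm_num
          _ ≤ q ^ 2 := Nat.pow_le_pow_left hq3 2
      have hmq0 : m * (q - 1) ≠ 0 := by
        intro h0
        rw [h0] at hmq
        omega
      have := Nat.le_of_dvd (Nat.pos_of_ne_zero hmq0) hdvd
      omega
    have hxm1 : x = -1 := by
      have h0 : (x - 1) * (x + 1) = 0 := by
        have : x ^ 2 - 1 = 0 := by rw [hx2]; ring
        calc (x - 1) * (x + 1) = x ^ 2 - 1 := by ring
          _ = 0 := this
      rcases mul_eq_zero.mp h0 with h | h
      · exact absurd (by linear_combination h : x = 1) hxne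
      · linear_combination h
    exact ⟨(g : L) ^ m, pow_ne_zero _ (Units.ne_zero g), by rw [← pow_mul, ← hx, hxm1]⟩
  -- S equals the kernel of x ↦ x^q + x
  set K : Finset L := univ.filter (fun b : L => b ^ q = -b) with hK
  have hιpow : ∀ t : F, (ι t) ^ q = ι t := by
    intro t
    rw [← map_pow]
    congr 1
    rw [← hF]
    exact FiniteField.pow_card t
  have hKS : K ⊆ S := by
    intro b hb
    rw [hK, mem_filter] at hb
    rw [hS, mem_filter]
    refine ⟨mem_univ _, fun t => ?_⟩
    have hz : (b * ι t) ^ (p ^ n) = -(b * ι t) := by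
      rw [← hq, mul_pow, hb.2, hιpow, neg_mul]
    exact aux_trace_eq_zero p hp L hz
  have hKcard : q ≤ K.card := by
    have himg : (univ : Finset F).image (fun t => ω * ι t) ⊆ K := by
      intro y hy
      obtain ⟨t, _, rfl⟩ := Finset.mem_image.mp hy
      rw [hK, mem_filter]
      refine ⟨mem_univ _, ?_⟩
      have hωq' : ω ^ q = -ω := by
        have : ω ^ q = ω ^ (q - 1) * ω := by
          rw [← pow_succ]
          congr 1
          omega
        rw [this, hωq, neg_one_mul]
      rw [mul_pow, hωq', hιpow, neg_mul]
    calc q = Fintype.card F := hF.symm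
      _ = ((univ : Finset F).image (fun t => ω * ι t)).card := by
          rw [Finset.card_image_of_injective _
            (fun a b hab => hι_inj (mul_left_cancel₀ hω0 hab)), Finset.card_univ]
      _ ≤ K.card := Finset.card_le_card himg
  have hSK : S = K := (Finset.eq_of_subset_of_card_le hKS (by rw [hScard]; exact hKcard)).symm
  have hbK : ∀ b : L, (∀ t : F, tr (b * ι t) = 0) ↔ b ^ q = -b := by
    intro b
    constructor
    · intro h
      have : b ∈ K := by rw [← hSK, hS, mem_filter]; exact ⟨mem_univ _, h⟩
      rw [hK, mem_filter] at this
      exact this.2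
    · intro h
      have : b ∈ S := by rw [hSK, hK, mem_filter]; exact ⟨mem_univ _, h⟩
      rw [hS, mem_filter] at this
      exact this.2
  -- fibers of the map x ↦ x^(q-1)
  set A : Finset L := univ.erase 0 with hA
  set φ : L → L := fun x => x ^ (q - 1) with hφ
  have hq10 : q - 1 ≠ 0 := by omega
  have hcardA : A.card = q ^ 2 - 1 := by
    rw [hA, Finset.card_erase_of_mem (mem_univ _), Finset.card_univ, hqL]
  have hFq1 : ∀ t : F, t ≠ 0 → t ^ (q - 1) = 1 := by
    intro t ht
    rw [← hF]
    exact FiniteField.pow_card_sub_one_eq_one t ht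
  have hFix : univ.filter (fun y : L => y ^ (q - 1) = 1) = (univ.erase (0 : F)).image ι := by
    refine (Finset.eq_of_subset_of_card_le ?_ ?_).symm
    · intro y hy
      obtain ⟨t, ht, rfl⟩ := Finset.mem_image.mp hy
      rw [mem_filter]
      exact ⟨mem_univ _, by rw [← map_pow, hFq1 t (Finset.ne_of_mem_erase ht), map_one]⟩
    · calc (univ.filter (fun y : L => y ^ (q - 1) = 1)).card ≤ q - 1 :=
            aux_card_pow_eq_le hq10 1
        _ = ((univ.erase (0 : F)).image ι).card := by
            rw [Finset.card_image_of_injective _ hι_inj,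
              Finset.card_erase_of_mem (mem_univ _), Finset.card_univ, hF]
  have hfib_eq : ∀ x₀ : L, x₀ ≠ 0 →
      A.filter (fun x => φ x = φ x₀) = (univ.erase (0 : F)).image (fun t => x₀ * ι t) := by
    intro x₀ hx₀
    ext x
    constructor
    · intro hx
      rw [mem_filter, hA, Finset.mem_erase] at hx
      obtain ⟨⟨hx0, -⟩, hxφ⟩ := hx
      have h1 : (x * x₀⁻¹) ^ (q - 1) = 1 := by
        rw [mul_pow, inv_pow]
        rw [hφ] at hxφ
        simp only at hxφ
        rw [hxφ]
        field_simp
      have : x * x₀⁻¹ ∈ (univ.erase (0 : F)).image ι := by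
        rw [← hFix, mem_filter]; exact ⟨mem_univ _, h1⟩
      obtain ⟨t, ht, htx⟩ := Finset.mem_image.mp this
      refine Finset.mem_image.mpr ⟨t, ht, ?_⟩
      rw [htx]
      field_simp
    · intro hx
      obtain ⟨t, ht, rfl⟩ := Finset.mem_image.mp hx
      have ht0 : t ≠ 0 := Finset.ne_of_mem_erase ht
      have hιt : ι t ≠ 0 := fun h => ht0 (hι_inj (by rw [h, map_zero]))
      rw [mem_filter, hA, Finset.mem_erase]
      refine ⟨⟨mul_ne_zero hx₀ hιt, mem_univ _⟩, ?_⟩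
      rw [hφ]
      simp only
      rw [mul_pow, ← map_pow, hFq1 t ht0, map_one, mul_one]
  have hfib_card : ∀ x₀ : L, x₀ ≠ 0 → (A.filter (fun x => φ x = φ x₀)).card = q - 1 := by
    intro x₀ hx₀
    rw [hfib_eq x₀ hx₀,
      Finset.card_image_of_injective _ (fun a b hab => hι_inj (mul_left_cancel₀ hx₀ hab)),
      Finset.card_erase_of_mem (mem_univ _), Finset.card_univ, hF]
  set I : Finset L := A.image φ with hI
  have hIcard : I.card = q + 1 := by
    have hsum : A.card = ∑ u ∈ I, (A.filter (fun x => φ x = u)).card :=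
      Finset.card_eq_sum_card_fiberwise (fun x hx => Finset.mem_image_of_mem φ hx)
    have hconst : ∀ u ∈ I, (A.filter (fun x => φ x = u)).card = q - 1 := by
      intro u hu
      obtain ⟨x₀, hx₀A, rfl⟩ := Finset.mem_image.mp hu
      exact hfib_card x₀ (Finset.ne_of_mem_erase hx₀A)
    rw [Finset.sum_congr rfl hconst, Finset.sum_const, smul_eq_mul, hcardA, hq2m1] at hsum
    exact Nat.eq_of_mul_eq_mul_right (by omega : 0 < q - 1) (by rw [← hsum]; ring)
  set U : Finset L := univ.filter (fun u : L => u ^ (q + 1) = 1) with hU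
  have hIU : I = U := by
    refine Finset.eq_of_subset_of_card_le ?_ ?_
    · intro u hu
      obtain ⟨x, hxA, rfl⟩ := Finset.mem_image.mp hu
      have hx0 : x ≠ 0 := Finset.ne_of_mem_erase hxA
      rw [hU, mem_filter]
      refine ⟨mem_univ _, ?_⟩
      rw [hφ]
      simp only
      rw [← pow_mul, ← hq2m1, ← hqL]
      exact FiniteField.pow_card_sub_one_eq_one x hx0
    · rw [hIcard]
      exact aux_card_pow_eq_le (by omega) 1
  -- counting roots of unity inside U
  have hq1dvd : (q + 1) ∣ Fintype.card L - 1 := by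
    rw [hcardL1, hq2m1]
    exact ⟨q - 1, mul_comm _ _⟩
  have hcount : ∀ j : ℕ, j ≠ 0 → (U.filter (fun u => u ^ j = 1)).card = Nat.gcd j (q + 1) := by
    intro j hj
    have hfe : U.filter (fun u => u ^ j = 1)
        = univ.filter (fun u : L => u ^ Nat.gcd j (q + 1) = 1) := by
      ext u
      rw [hU, filter_filter]
      simp only [mem_filter, mem_univ, true_and]
      constructor
      · rintro ⟨h1, h2⟩
        exact orderOf_dvd_iff_pow_eq_one.mp
          (Nat.dvd_gcd (orderOf_dvd_of_pow_eq_one h2) (orderOf_dvd_of_pow_eq_one h1))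
      · intro h
        have hd := orderOf_dvd_of_pow_eq_one h
        exact ⟨orderOf_dvd_iff_pow_eq_one.mp (hd.trans (Nat.gcd_dvd_right _ _)),
          orderOf_dvd_iff_pow_eq_one.mp (hd.trans (Nat.gcd_dvd_left _ _))⟩
    rw [hfe]
    exact aux_card_rootsOfUnity (fun h0 => hj (Nat.eq_zero_of_gcd_eq_zero_left h0))
      ((Nat.gcd_dvd_right j (q + 1)).trans hq1dvd)
  have hone_mem : ∀ u : L, u ^ k = 1 → u ^ (k - 1) = 1 → u = 1 := by
    intro u h1 h2
    have hk' : u ^ k = u ^ (k - 1) * u := by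
      rw [← pow_succ]
      congr 1
      omega
    calc u = 1 * u := (one_mul u).symm
      _ = u ^ (k - 1) * u := by rw [h2]
      _ = u ^ k := hk'.symm
      _ = 1 := h1
  -- per-fiber sums
  have hs0 : s ≠ 0 := by
    rw [hsk]; omega
  have hfibsum : ∀ u ∈ I, ∑ x ∈ A.filter (fun x => φ x = u), ψ (x ^ s - x)
      = (if (u ^ k = 1 ∨ u ^ (k - 1) = 1) then (q : ℂ) else 0) - 1 := by
    intro u hu
    have huU : u ∈ U := by rw [← hIU]; exact hu
    have hu1 : u ^ (q + 1) = 1 := by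
      rw [hU, mem_filter] at huU; exact huU.2
    have hu0 : u ≠ 0 := by
      intro h0
      rw [h0, zero_pow (by omega : q + 1 ≠ 0)] at hu1
      exact zero_ne_one hu1
    obtain ⟨x₀, hx₀A, hx₀u⟩ := Finset.mem_image.mp hu
    have hx₀ : x₀ ≠ 0 := Finset.ne_of_mem_erase hx₀A
    have hx₀pow : x₀ ^ (q - 1) = u := hx₀u
    set b : L := (u ^ k - 1) * x₀ with hb
    -- each fiber element contributes ψ (b * ι t)
    have hterm : ∀ t : F, t ≠ 0 → (x₀ * ι t) ^ s - x₀ * ι t = b * ι t := by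
      intro t ht0
      have h1 : (x₀ * ι t) ^ (q - 1) = u := by
        rw [mul_pow, ← map_pow, hFq1 t ht0, map_one, mul_one, hx₀pow]
      have h2 : (x₀ * ι t) ^ s = x₀ * ι t * u ^ k := by
        rw [hsk, pow_add, pow_one, mul_comm k (q - 1), pow_mul, h1]
      rw [h2, hb]
      ring
    have hsum1 : ∑ x ∈ A.filter (fun x => φ x = u), ψ (x ^ s - x)
        = ∑ t ∈ (univ.erase (0 : F)), ψ (b * ι t) := by
      have heq : A.filter (fun x => φ x = u) = A.filter (fun x => φ x = φ x₀) := by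
        congr 1
        ext x
        rw [hφ]
        simp only
        rw [hx₀pow]
      rw [heq, hfib_eq x₀ hx₀,
        Finset.sum_image (fun a _ b' _ hab => hι_inj (mul_left_cancel₀ hx₀ hab))]
      exact Finset.sum_congr rfl fun t ht =>
        congrArg ψ (hterm t (Finset.ne_of_mem_erase ht))
    have hsum2 : ∑ t ∈ (univ.erase (0 : F)), ψ (b * ι t) = (∑ t : F, ψ (b * ι t)) - 1 := by
      have h := Finset.add_sum_erase univ (fun t : F => ψ (b * ι t)) (mem_univ (0 : F))
      have hb0 : ψ (b * ι 0) = 1 := by rw [map_zero, mul_zero, AddChar.map_zero_eq_one]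
      rw [hb0] at h
      linear_combination h
    -- the condition for the character to be trivial
    have hcond : b ^ q = -b ↔ (u ^ k = 1 ∨ u ^ (k - 1) = 1) := by
      by_cases hk1 : u ^ k = 1
      · constructor
        · intro _; exact Or.inl hk1
        · intro _
          rw [hb, hk1, sub_self, zero_mul]
          rw [zero_pow (by omega : q ≠ 0), neg_zero]
      · have hbne : u ^ k - 1 ≠ 0 := sub_ne_zero.mpr hk1
        have huq : u ^ q = u⁻¹ := by
          apply eq_inv_of_mul_eq_one_left
          rw [← pow_succ, hu1]
        have hx₀q : x₀ ^ q = u * x₀ := by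
          rw [← hx₀pow, ← pow_succ]
          congr 1
          omega
        have hbq : b ^ q = ((u ^ k)⁻¹ - 1) * u * x₀ := by
          rw [hb, mul_pow]
          rw [hq] at hx₀q ⊢
          rw [sub_pow_char_pow, one_pow, hx₀q, ← hq]
          rw [← pow_mul, mul_comm k q, pow_mul, huq, inv_pow]
          ring
        constructor
        · intro h
          rw [hbq, hb] at h
          have h' : ((u ^ k)⁻¹ - 1) * u = -(u ^ k - 1) := by
            have := mul_right_cancel₀ hx₀ (by linear_combination h :
              ((u ^ k)⁻¹ - 1) * u * x₀ = -(u ^ k - 1) * x₀)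
            linear_combination this
          right
          have hvne : (u ^ k : L) ≠ 0 := pow_ne_zero _ hu0
          have h'' : (1 - u ^ k) * u = (1 - u ^ k) * u ^ k := by
            have hinv : (u ^ k)⁻¹ * u ^ k = 1 := inv_mul_cancel₀ hvne
            have hmul := congrArg (fun z : L => z * u ^ k) h'
            linear_combination hmul - u * hinv
          have hueq : u = u ^ k := mul_left_cancel₀ (sub_ne_zero.mpr (Ne.symm hk1)) h''
          have : u ^ (k - 1) * u = 1 * u := by
            rw [one_mul, ← pow_succ]
            rw [show k - 1 + 1 = k by omega]
            exact hueq.symm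
          exact mul_right_cancel₀ hu0 this
        · intro h
          rcases h with h | h
          · exact absurd h hk1
          · -- u^(k-1) = 1 gives u^k = u
            have hueq : u ^ k = u := by
              have : u ^ k = u ^ (k - 1) * u := by
                rw [← pow_succ]; congr 1; omega
              rw [this, h, one_mul]
            rw [hbq, hb, hueq]
            linear_combination x₀ * inv_mul_cancel₀ hu0
    rw [hsum1, hsum2, hT b]
    congr 2
    rw [eq_iff_iff]
    exact (hbK b).trans hcond
  -- inclusion-exclusion count
  have hk0 : k ≠ 0 := by omega
  have hk10 : k - 1 ≠ 0 := by omega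
  have hPQ : (U.filter (fun u => u ^ k = 1 ∨ u ^ (k - 1) = 1)).card + 1
      = Nat.gcd k (q + 1) + Nat.gcd (k - 1) (q + 1) := by
    have hunion : U.filter (fun u => u ^ k = 1 ∨ u ^ (k - 1) = 1)
        = U.filter (fun u => u ^ k = 1) ∪ U.filter (fun u => u ^ (k - 1) = 1) :=
      Finset.filter_or _ _ _
    have hinter : U.filter (fun u => u ^ k = 1) ∩ U.filter (fun u => u ^ (k - 1) = 1)
        = {(1 : L)} := by
      ext u
      simp only [hU, Finset.mem_inter, mem_filter, Finset.mem_singleton, mem_univ, true_and]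
      constructor
      · rintro ⟨⟨-, h1⟩, ⟨-, h2⟩⟩
        exact hone_mem u h1 h2
      · rintro rfl
        simp
    have := Finset.card_union_add_card_inter (U.filter (fun u => u ^ k = 1))
      (U.filter (fun u => u ^ (k - 1) = 1))
    rw [← hunion, hinter, Finset.card_singleton, hcount k hk0, hcount (k - 1) hk10] at this
    exact this
  have hUcard : U.card = q + 1 := hIU ▸ hIcard
  -- final computation
  calc weilSum p L s 1 = ∑ x : L, ψ (x ^ s - x) := hW
    _ = ψ ((0 : L) ^ s - 0) + ∑ x ∈ A, ψ (x ^ s - x) :=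
        (Finset.add_sum_erase univ (fun x : L => ψ (x ^ s - x)) (mem_univ 0)).symm
    _ = 1 + ∑ u ∈ I, ∑ x ∈ A.filter (fun x => φ x = u), ψ (x ^ s - x) := by
        rw [zero_pow hs0, sub_zero, AddChar.map_zero_eq_one]
        congr 1
        exact (Finset.sum_fiberwise_of_maps_to (fun x hx => Finset.mem_image_of_mem φ hx) _).symm
    _ = 1 + ∑ u ∈ I, ((if (u ^ k = 1 ∨ u ^ (k - 1) = 1) then (q : ℂ) else 0) - 1) :=
        congrArg (1 + ·) (Finset.sum_congr rfl hfibsum)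
    _ = 1 + (((I.filter (fun u => u ^ k = 1 ∨ u ^ (k - 1) = 1)).card : ℂ) * q - I.card) := by
        rw [Finset.sum_sub_distrib, Finset.sum_ite, Finset.sum_const_zero, add_zero,
          Finset.sum_const, Finset.sum_const, nsmul_eq_mul, nsmul_eq_mul, mul_one]
    _ = (p : ℂ) ^ n * ((Nat.gcd k (q + 1) : ℂ) + (Nat.gcd (k - 1) (q + 1) : ℂ) - 2) := by
        rw [hIU, hUcard]
        have hcardC : ((U.filter (fun u => u ^ k = 1 ∨ u ^ (k - 1) = 1)).card : ℂ)
            = (Nat.gcd k (q + 1) : ℂ) + (Nat.gcd (k - 1) (q + 1) : ℂ) - 1 := by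
          have h' : ((U.filter (fun u => u ^ k = 1 ∨ u ^ (k - 1) = 1)).card : ℂ) + 1
              = (Nat.gcd k (q + 1) : ℂ) + (Nat.gcd (k - 1) (q + 1) : ℂ) := by
            exact_mod_cast congrArg (fun m : ℕ => (m : ℂ)) hPQ
          linear_combination h'
        rw [hcardC]
        have hqc : (q : ℂ) = (p : ℂ) ^ n := by rw [hq]; push_cast; ring
        push_cast
        rw [hqc]
        ring
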